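/- Let C be a small category, M and A locally small categories (hom-sets in Type u), i : M ⥤ (Cᵒᵖ ⥤ Type u), f : C ⥤ A and k : M ⥤ A functors. Let y_C : C ⥤ (Cᵒᵖ ⥤ Type u) be the Yoneda embedding and let y_C/i = Comma y_C i, with projections p : y_C/i ⥤ C and q : y_C/i ⥤ M; by the Yoneda lemma its objects may be identified with triples (c, m, x) where x ∈ (i.obj m).obj c. Define A(f,1) : A ⥤ (Cᵒᵖ ⥤ Type u) by a ↦ (c ↦ Hom_A(f.obj c, a)). Given a natural transformation η' : p ⋙ f ⟶ q ⋙ k, let η : i ⟶ k ⋙ A(f,1) be the natural transformation whose component at m, evaluated at c, sends x ∈ (i.obj m).obj c to η'.app (c, m, x) : f.obj c ⟶ k.obj m. Then η exhibits k as an absolute left lifting of i along A(f,1) if and only if η' exhibits k as a pointwise left Kan extension of p ⋙ f along q. -/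

import Mathlib

open CategoryTheory Opposite

universe u v₁ v₂ v₃ u₁ u₂ u₃ ux vx

section HomFunctor

variable {A : Type u₁} {B : Type u₂} {C : Type u₃}
variable [Category.{u} A] [Category.{u} B] [Category.{u} C]

/-- The functor `B(g,1) : B ⥤ (Aᵒᵖ ⥤ Type u)`, `b ↦ (a ↦ Hom_B(g.obj a, b))`. -/
def homFunctor (g : A ⥤ B) : B ⥤ (Aᵒᵖ ⥤ Type u) where
  obj b :=
    { obj := fun a => (g.obj a.unop ⟶ b)
      map := fun m => TypeCat.ofHom fun β => g.map m.unop ≫ β }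
  map k := { app := fun a => TypeCat.ofHom fun β => β ≫ k }

end HomFunctor

/-- `ψ : s ⟶ h ⋙ t` exhibits `h` as an absolute left lifting of `s` along `t` when for
every category `X` and all functors `x : X ⥤ B`, `k : X ⥤ C`, pasting with the whiskering
of `ψ` by `x` is a bijection from 2-cells `x ⋙ h ⟶ k` to 2-cells `x ⋙ s ⟶ k ⋙ t`. -/
def ExhibitsAbsoluteLeftLifting.{xu, xv, bu, bv, cu, cv, pu, pv}
    {B : Type bu} {C : Type cu} {P : Type pu}
    [Category.{bv} B] [Category.{cv} C] [Category.{pv} P]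
    (s : B ⥤ P) (h : B ⥤ C) (t : C ⥤ P) (ψ : s ⟶ h ⋙ t) : Prop :=
  ∀ (X : Type xu) [Category.{xv} X] (x : X ⥤ B) (k : X ⥤ C),
    Function.Bijective fun δ : x ⋙ h ⟶ k => Functor.whiskerLeft x ψ ≫ Functor.whiskerRight δ t

section Statement18

variable {C : Type u} [SmallCategory C] {M : Type u₁} [Category.{u} M]
variable {A : Type u₂} [Category.{u} A]

/-- The 2-cell `η : i ⟶ k ⋙ A(f,1)` associated to `η' : p ⋙ f ⟶ q ⋙ k`, with
component at `m`, evaluated at `c`, sending `x ∈ (i.obj m).obj c` to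
`η'.app (c, m, x) : f.obj c.unop ⟶ k.obj m` (identifying, via the Yoneda lemma, the
objects of the comma category `y_C/i` with triples `(c, m, x)`). -/
def etaOf (i : M ⥤ Cᵒᵖ ⥤ Type u) (f : C ⥤ A) (k : M ⥤ A)
    (η' : Comma.fst yoneda i ⋙ f ⟶ Comma.snd yoneda i ⋙ k) :
    i ⟶ k ⋙ homFunctor f where
  app m :=
    { app := fun c => TypeCat.ofHom fun x => η'.app { left := unop c, right := m, hom := yonedaEquiv.symm x }
      naturality := by
        intro c c' γ
        ext x
        have hn := η'.naturality
          (X := Comma.mk (L := yoneda) (unop c') m (yonedaEquiv.symm ((i.obj m).map γ x)))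
          (Y := Comma.mk (L := yoneda) (unop c) m (yonedaEquiv.symm x))
          ⟨γ.unop, 𝟙 m, by
            rw [CategoryTheory.Functor.map_id, Category.comp_id]
            exact yonedaEquiv_symm_naturality_left γ.unop (i.obj m) x⟩
        dsimp [homFunctor] at hn ⊢
        simp only [Comma.fst_map, Comma.snd_map, CategoryTheory.Functor.map_id, Category.comp_id] at hn
        rw [hn]
        erw [k.map_id, Category.comp_id] }
  naturality := by
    intro m m' μ
    ext c x
    have hn := η'.naturality
      (X := Comma.mk (L := yoneda) (unop c) m (yonedaEquiv.symm x))
      (Y := Comma.mk (L := yoneda) (unop c) m' (yonedaEquiv.symm ((i.map μ).app c x)))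
      ⟨𝟙 (unop c), μ, by
        rw [CategoryTheory.Functor.map_id, Category.id_comp]
        exact (yonedaEquiv_symm_naturality_right (unop c) (i.map μ) x).symm⟩
    dsimp [homFunctor] at hn ⊢
    simp only [Comma.fst_map, Comma.snd_map, CategoryTheory.Functor.map_id, Category.id_comp] at hn
    rw [← hn]
    erw [f.map_id, Category.id_comp]

namespace Stmt18Aux

open Limits Functor

variable (i : M ⥤ Cᵒᵖ ⥤ Type u) (f : C ⥤ A) (k : M ⥤ A)

/-- The cocone on `CostructuredArrow (Comma.snd yoneda i) m` associated to a presheaf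
morphism `i.obj m ⟶ (homFunctor f).obj a`. -/
@[simps]
def coconeOf (m : M) {a : A} (φ : i.obj m ⟶ (homFunctor f).obj a) :
    Cocone (CostructuredArrow.proj (Comma.snd yoneda i) m ⋙ (Comma.fst yoneda i ⋙ f)) where
  pt := a
  ι :=
    { app := fun j => yonedaEquiv (j.left.hom ≫ i.map j.hom ≫ φ)
      naturality := by
        intro j j' ψ
        have hw : ψ.left.right ≫ j'.hom = j.hom := by simpa using CostructuredArrow.w ψ
        have hn := yonedaEquiv_naturality (F := (homFunctor f).obj a)
          (j'.left.hom ≫ i.map j'.hom ≫ φ) ψ.left.left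
        dsimp [homFunctor] at hn
        dsimp
        erw [Category.comp_id]
        refine Eq.trans hn ?_
        congr 1
        rw [← Category.assoc, ψ.left.w, Category.assoc]
        erw [← Functor.map_comp_assoc, hw]
        rfl }

lemma coconeOf_app_mk (m : M) {a : A} (φ : i.obj m ⟶ (homFunctor f).obj a)
    (c : C) (α : yoneda.obj c ⟶ i.obj m) :
    (coconeOf i f m φ).ι.app
        (CostructuredArrow.mk (Y := Comma.mk (L := yoneda) c m α) (𝟙 m))
      = φ.app (op c) (yonedaEquiv α) := by
  dsimp [coconeOf]
  rw [CategoryTheory.Functor.map_id, Category.id_comp, yonedaEquiv_comp]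

lemma coconeOf_injective (m : M) {a : A} {φ φ' : i.obj m ⟶ (homFunctor f).obj a}
    (h : ∀ j, (coconeOf i f m φ).ι.app j = (coconeOf i f m φ').ι.app j) : φ = φ' := by
  ext c χ
  obtain ⟨α, rfl⟩ := yonedaEquiv.surjective χ
  have := h (CostructuredArrow.mk (Y := Comma.mk (L := yoneda) (unop c) m α) (𝟙 m))
  rw [coconeOf_app_mk, coconeOf_app_mk] at this
  exact this

/-- The presheaf morphism associated to a cocone. -/
@[simps]
def presheafOf (m : M)
    (s : Cocone (CostructuredArrow.proj (Comma.snd yoneda i) m ⋙ (Comma.fst yoneda i ⋙ f))) :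
    i.obj m ⟶ (homFunctor f).obj s.pt where
  app c := TypeCat.ofHom fun χ => s.ι.app
    (CostructuredArrow.mk (Y := Comma.mk (L := yoneda) (unop c) m (yonedaEquiv.symm χ)) (𝟙 m))
  naturality := by
    intro c c' γ
    ext χ
    have hw := s.w
      (j' := CostructuredArrow.mk (S := Comma.snd yoneda i)
        (Y := Comma.mk (L := yoneda) (unop c') m (yonedaEquiv.symm ((i.obj m).map γ χ))) (𝟙 m))
      (j := CostructuredArrow.mk (S := Comma.snd yoneda i)
        (Y := Comma.mk (L := yoneda) (unop c) m (yonedaEquiv.symm χ)) (𝟙 m))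
      (CostructuredArrow.homMk
        ⟨γ.unop, 𝟙 m, by
          dsimp
          rw [CategoryTheory.Functor.map_id, Category.comp_id]
          exact yonedaEquiv_symm_naturality_left γ.unop (i.obj m) χ⟩
        (by exact Category.id_comp _))
    dsimp [homFunctor, CostructuredArrow.homMk] at hw ⊢
    exact hw.symm

lemma coconeOf_presheafOf (m : M)
    (s : Cocone (CostructuredArrow.proj (Comma.snd yoneda i) m ⋙ (Comma.fst yoneda i ⋙ f)))
    (j : CostructuredArrow (Comma.snd yoneda i) m) :
    (coconeOf i f m (presheafOf i f m s)).ι.app j = s.ι.app j := by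
  have hw2 := s.w (j' := j)
    (j := CostructuredArrow.mk (S := Comma.snd yoneda i)
      (Y := Comma.mk (L := yoneda) j.left.left m
        (yonedaEquiv.symm (yonedaEquiv (j.left.hom ≫ i.map j.hom)))) (𝟙 m))
    (CostructuredArrow.homMk ⟨𝟙 j.left.left, j.hom, by simp⟩ (by exact Category.comp_id _))
  dsimp [CostructuredArrow.homMk] at hw2
  erw [f.map_id, Category.id_comp] at hw2
  have h1 : (coconeOf i f m (presheafOf i f m s)).ι.app j
      = (presheafOf i f m s).app (op j.left.left) (yonedaEquiv (j.left.hom ≫ i.map j.hom)) := by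
    dsimp [coconeOf]
    rw [← Category.assoc, yonedaEquiv_comp]
  rw [h1]
  exact hw2

variable (η' : Comma.fst yoneda i ⋙ f ⟶ Comma.snd yoneda i ⋙ k)

lemma coconeOf_eta (m : M) {a : A} (g : k.obj m ⟶ a)
    (j : CostructuredArrow (Comma.snd yoneda i) m) :
    (coconeOf i f m ((etaOf i f k η').app m ≫ (homFunctor f).map g)).ι.app j
      = ((LeftExtension.mk k η').coconeAt m).ι.app j ≫ g := by
  have hn := η'.naturality (X := j.left)
    (Y := Comma.mk (L := yoneda) j.left.left m (j.left.hom ≫ i.map j.hom))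
    ⟨𝟙 j.left.left, j.hom, by simp⟩
  dsimp at hn
  simp only [Comma.fst_map, Comma.snd_map, CategoryTheory.Functor.map_id, Category.id_comp] at hn
  erw [CategoryTheory.Functor.map_id, Category.id_comp] at hn
  have h1 : (coconeOf i f m ((etaOf i f k η').app m ≫ (homFunctor f).map g)).ι.app j
      = ((etaOf i f k η').app m ≫ (homFunctor f).map g).app (op j.left.left)
          (yonedaEquiv (j.left.hom ≫ i.map j.hom)) := by
    dsimp [coconeOf]
    rw [← Category.assoc, yonedaEquiv_comp]
    rfl
  rw [h1]
  rw [show ((etaOf i f k η').app m ≫ (homFunctor f).map g).app (op j.left.left)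
        (yonedaEquiv (j.left.hom ≫ i.map j.hom))
      = η'.app (Comma.mk (L := yoneda) j.left.left m
          (yonedaEquiv.symm (yonedaEquiv (j.left.hom ≫ i.map j.hom)))) ≫ g from rfl,
    Equiv.symm_apply_apply, hn]
  rfl

/-- A one-object category in arbitrary universes. -/
structure Pt : Type ux where

instance : Category.{vx} Pt where
  Hom _ _ := PUnit.{vx + 1}
  id _ := ⟨⟩
  comp _ _ := ⟨⟩

/-- The natural transformation between constant-shaped functors associated to `g`. -/
def ptNat {m : M} {a : A} (g : k.obj m ⟶ a) :
    (Functor.const Pt).obj m ⋙ k ⟶ (Functor.const Pt).obj a where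
  app _ := g
  naturality := by intros; simp

/-- The natural transformation between constant-shaped functors associated to `φ`. -/
def ptNat₂ {m : M} {a : A} (φ : i.obj m ⟶ (homFunctor f).obj a) :
    (Functor.const Pt).obj m ⋙ i ⟶ (Functor.const Pt).obj a ⋙ homFunctor f where
  app _ := φ
  naturality := by intros; simp

lemma bijective_of_lifting
    (H : ExhibitsAbsoluteLeftLifting.{ux, vx} i k (homFunctor f) (etaOf i f k η'))
    (m : M) (a : A) :
    Function.Bijective (fun g : k.obj m ⟶ a =>
      (etaOf i f k η').app m ≫ (homFunctor f).map g) := by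
  obtain ⟨hinj, hsurj⟩ := H Pt ((Functor.const Pt).obj m) ((Functor.const Pt).obj a)
  constructor
  · intro g g' h
    have h2 : ptNat k g = ptNat k g' := hinj (NatTrans.ext (funext fun _ => h))
    exact congrArg (fun τ => τ.app ⟨⟩) h2
  · intro φ
    obtain ⟨δ, hδ⟩ := hsurj (ptNat₂ i f φ)
    exact ⟨δ.app ⟨⟩, congrArg (fun τ => τ.app ⟨⟩) hδ⟩

end Stmt18Aux

/-- Let `C` be small, `i : M ⥤ (Cᵒᵖ ⥤ Type u)`, `f : C ⥤ A`,
`k : M ⥤ A`, and let `η' : p ⋙ f ⟶ q ⋙ k` be a 2-cell on the comma category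
`y_C/i = Comma yoneda i`.  Then the associated 2-cell `η : i ⟶ k ⋙ A(f,1)` exhibits `k`
as an absolute left lifting of `i` along `A(f,1)` if and only if `η'` exhibits `k` as a
pointwise left Kan extension of `p ⋙ f` along `q`. -/
theorem stmt18 (i : M ⥤ Cᵒᵖ ⥤ Type u) (f : C ⥤ A) (k : M ⥤ A)
    (η' : Comma.fst yoneda i ⋙ f ⟶ Comma.snd yoneda i ⋙ k) :
    ExhibitsAbsoluteLeftLifting.{ux, vx} i k (homFunctor f) (etaOf i f k η') ↔
      Nonempty (Functor.LeftExtension.mk k η').IsPointwiseLeftKanExtension := by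
  open Stmt18Aux in
  constructor
  · intro H
    refine ⟨fun m => ?_⟩
    have bij := fun a => bijective_of_lifting i f k η' H m a
    exact
      { desc := fun s => (Equiv.ofBijective _ (bij s.pt)).symm (presheafOf i f m s)
        fac := fun s j => by
          have h1 : (etaOf i f k η').app m ≫ (homFunctor f).map
              ((Equiv.ofBijective _ (bij s.pt)).symm (presheafOf i f m s))
              = presheafOf i f m s :=
            (Equiv.ofBijective _ (bij s.pt)).apply_symm_apply _
          rw [← coconeOf_eta i f k η' m _ j, h1]
          exact coconeOf_presheafOf i f m s j
        uniq := fun s g hg => by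
          have h2 : (etaOf i f k η').app m ≫ (homFunctor f).map g = presheafOf i f m s :=
            coconeOf_injective i f m (fun j => by
              rw [coconeOf_eta i f k η' m g j, hg j]
              exact (coconeOf_presheafOf i f m s j).symm)
          exact (Equiv.eq_symm_apply _).mpr h2 }
  · rintro ⟨hpt⟩
    intro X _ x l
    constructor
    · intro δ δ' h
      ext X₀
      apply (hpt (x.obj X₀)).hom_ext
      intro j
      have hc : (etaOf i f k η').app (x.obj X₀) ≫ (homFunctor f).map (δ.app X₀)
          = (etaOf i f k η').app (x.obj X₀) ≫ (homFunctor f).map (δ'.app X₀) :=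
        congrArg (fun τ => τ.app X₀) h
      rw [← coconeOf_eta i f k η' (x.obj X₀) (δ.app X₀) j,
        ← coconeOf_eta i f k η' (x.obj X₀) (δ'.app X₀) j, hc]
    · intro Ψ
      refine ⟨⟨fun X₀ => (hpt (x.obj X₀)).desc (coconeOf i f (x.obj X₀) (Ψ.app X₀)), ?_⟩, ?_⟩
      · intro X₀ X₁ θ
        apply (hpt (x.obj X₀)).hom_ext
        intro j
        have fac₀ := (hpt (x.obj X₀)).fac (coconeOf i f (x.obj X₀) (Ψ.app X₀)) j
        have fac₁ := (hpt (x.obj X₁)).fac (coconeOf i f (x.obj X₁) (Ψ.app X₁))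
          (CostructuredArrow.mk (S := Comma.snd yoneda i) (Y := j.left) (j.hom ≫ x.map θ))
        have hn := Ψ.naturality θ
        have h2 : j.left.hom ≫ i.map j.hom ≫ Ψ.app X₀ ≫ (homFunctor f).map (l.map θ)
            = j.left.hom ≫ i.map (j.hom ≫ x.map θ) ≫ Ψ.app X₁ := by
          rw [i.map_comp, Category.assoc]
          congr 1
          congr 1
          exact hn.symm
        have fac₀' : (η'.app j.left ≫ k.map j.hom) ≫
              (hpt (x.obj X₀)).desc (coconeOf i f (x.obj X₀) (Ψ.app X₀))
            = yonedaEquiv (j.left.hom ≫ i.map j.hom ≫ Ψ.app X₀) := fac₀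
        have fac₁' : (η'.app j.left ≫ k.map (j.hom ≫ x.map θ)) ≫
              (hpt (x.obj X₁)).desc (coconeOf i f (x.obj X₁) (Ψ.app X₁))
            = yonedaEquiv (j.left.hom ≫ i.map (j.hom ≫ x.map θ) ≫ Ψ.app X₁) := fac₁
        exact (show (η'.app j.left ≫ k.map j.hom) ≫ (x ⋙ k).map θ ≫
              (hpt (x.obj X₁)).desc (coconeOf i f (x.obj X₁) (Ψ.app X₁))
              = (η'.app j.left ≫ k.map (j.hom ≫ x.map θ)) ≫
                  (hpt (x.obj X₁)).desc (coconeOf i f (x.obj X₁) (Ψ.app X₁)) by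
                simp only [Functor.comp_map, Functor.map_comp, Category.assoc]
                erw [Category.assoc, Category.assoc]).trans
          (fac₁'.trans
          ((congrArg (fun t => yonedaEquiv t) h2).symm.trans
          ((congrArg (fun t => yonedaEquiv t) (Category.assoc _ _ _).symm).trans
          ((yonedaEquiv_comp _ _).trans
          (show yonedaEquiv (j.left.hom ≫ i.map j.hom ≫ Ψ.app X₀) ≫ l.map θ
              = (η'.app j.left ≫ k.map j.hom) ≫
              (hpt (x.obj X₀)).desc (coconeOf i f (x.obj X₀) (Ψ.app X₀)) ≫ l.map θ by
                rw [← fac₀']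
                exact Category.assoc _ _ _)))))
      · apply NatTrans.ext
        funext X₀
        show (etaOf i f k η').app (x.obj X₀) ≫ (homFunctor f).map
            ((hpt (x.obj X₀)).desc (coconeOf i f (x.obj X₀) (Ψ.app X₀))) = Ψ.app X₀
        refine coconeOf_injective i f (x.obj X₀) (fun j => ?_)
        erw [coconeOf_eta i f k η' (x.obj X₀) _ j]
        exact (hpt (x.obj X₀)).fac (coconeOf i f (x.obj X₀) (Ψ.app X₀)) j

end Statement18
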